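/- arXiv:2601.06556 — 6 statements merged into one kernel-verified Lean document; each statement's English description precedes it below -/
import Mathlib

section
/- Let λ₁ ≤ λ₂ ≤ ⋯ ≤ λ_N be real numbers with ∑_{i=1}^N λᵢ = Nλ̄ and λ̄ ≥ 0. Let θ ≥ 0 and let α be a positive integer with 1 ≤ α < N. If for every integer 1 ≤ k ≤ α one has λ₁ + ⋯ + λ_k ≥ -kθλ̄, then λ₁ ≥ -((α-1)N + α(N-1)θ)/(N-α) · λ̄. -/
theorem stmt_1 (N α : ℕ) (hN : 2 ≤ N) (hα1 : 1 ≤ α) (hαN : α < N)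
    (lam : ℕ → ℝ) (lamBar θ : ℝ)
    (hmono : ∀ i j, 1 ≤ i → i ≤ j → j ≤ N → lam i ≤ lam j)
    (hsum : ∑ i ∈ Finset.Icc 1 N, lam i = N * lamBar)
    (hbar : 0 ≤ lamBar) (hθ : 0 ≤ θ)
    (hcone : ∀ k, 1 ≤ k → k ≤ α → ∑ i ∈ Finset.Icc 1 k, lam i ≥ -(k * θ * lamBar)) :
    lam 1 ≥ -((((α : ℝ) - 1) * N + α * ((N : ℝ) - 1) * θ) / ((N : ℝ) - α)) * lamBar := by
  have hαN' : (α : ℝ) < N := by exact_mod_cast hαN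
  have hα1' : (1 : ℝ) ≤ α := by exact_mod_cast hα1
  have hpos : (0 : ℝ) < (N : ℝ) - α := by linarith
  set M := lam (α + 1) with hMdef
  -- split Icc 1 N = Icc 1 α ∪ Icc (α+1) N
  have hsplit1 : (∑ i ∈ Finset.Icc 1 α, lam i) + ∑ i ∈ Finset.Icc (α+1) N, lam i
      = ∑ i ∈ Finset.Icc 1 N, lam i := by
    rw [show Finset.Icc 1 α = Finset.Ioc 0 α from Finset.Icc_add_one_left_eq_Ioc 0 α,
        show Finset.Icc (α+1) N = Finset.Ioc α N from Finset.Icc_add_one_left_eq_Ioc α N,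
        show Finset.Icc 1 N = Finset.Ioc 0 N from Finset.Icc_add_one_left_eq_Ioc 0 N]
    exact Finset.sum_Ioc_consecutive _ (Nat.zero_le α) (le_of_lt hαN)
  have hone : Finset.Ioc 0 1 = ({1} : Finset ℕ) := by
    ext x; simp [Finset.mem_Ioc]
  have hsplit2 : lam 1 + ∑ i ∈ Finset.Icc 2 α, lam i = ∑ i ∈ Finset.Icc 1 α, lam i := by
    rw [show Finset.Icc 2 α = Finset.Ioc 1 α from Finset.Icc_add_one_left_eq_Ioc 1 α,
        show Finset.Icc 1 α = Finset.Ioc 0 α from Finset.Icc_add_one_left_eq_Ioc 0 α,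
        show lam 1 = ∑ i ∈ Finset.Ioc 0 1, lam i by rw [hone, Finset.sum_singleton]]
    exact Finset.sum_Ioc_consecutive _ (Nat.zero_le 1) hα1
  have h1 : ∑ i ∈ Finset.Icc 1 α, lam i ≥ -(α * θ * lamBar) := hcone α hα1 le_rfl
  -- tail sum bound: each term ≥ M
  have h2 : ((N : ℝ) - α) * M ≤ ∑ i ∈ Finset.Icc (α+1) N, lam i := by
    have hb : ∀ i ∈ Finset.Icc (α+1) N, M ≤ lam i := by
      intro i hi
      rw [Finset.mem_Icc] at hi
      exact hmono (α+1) i (by omega) hi.1 hi.2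
    have h := Finset.card_nsmul_le_sum (Finset.Icc (α+1) N) lam M hb
    have hcard : (Finset.Icc (α+1) N).card = N - α := by rw [Nat.card_Icc]; omega
    rw [hcard, nsmul_eq_mul, Nat.cast_sub (le_of_lt hαN)] at h
    exact h
  -- middle sum bound: each term ≤ M
  have h3 : ∑ i ∈ Finset.Icc 2 α, lam i ≤ ((α : ℝ) - 1) * M := by
    have hb : ∀ i ∈ Finset.Icc 2 α, lam i ≤ M := by
      intro i hi
      rw [Finset.mem_Icc] at hi
      exact hmono i (α+1) (by omega) (by omega) (by omega)
    have h := Finset.sum_le_card_nsmul (Finset.Icc 2 α) lam M hb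
    have hcard : (Finset.Icc 2 α).card = α - 1 := by rw [Nat.card_Icc]; omega
    rw [hcard, nsmul_eq_mul, Nat.cast_sub hα1, Nat.cast_one] at h
    exact h
  -- (N-α) M ≤ (N + αθ) λ̄
  have hM1 : ((N : ℝ) - α) * M ≤ ((N : ℝ) + α * θ) * lamBar := by nlinarith
  have hM2 : ((α : ℝ) - 1) * (((N : ℝ) - α) * M) ≤ ((α : ℝ) - 1) * (((N : ℝ) + α * θ) * lamBar) :=
    mul_le_mul_of_nonneg_left hM1 (by linarith)
  have hL : -lam 1 ≤ α * θ * lamBar + ((α : ℝ) - 1) * M := by linarith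
  have hL2 : -lam 1 * ((N : ℝ) - α) ≤ (α * θ * lamBar + ((α : ℝ) - 1) * M) * ((N : ℝ) - α) :=
    mul_le_mul_of_nonneg_right hL (le_of_lt hpos)
  rw [ge_iff_le, neg_mul, neg_le, div_mul_eq_mul_div, le_div_iff₀ hpos]
  nlinarith [hL2, hM2]
end

section
/- Let λ₁ ≤ λ₂ ≤ ⋯ ≤ λ_N be real numbers with ∑λᵢ = Nλ̄ and λ̄ ≥ 0. Let θ ≥ 0 and let α ∈ [1, N) be a real number with integer part [α]. If the cone condition (1/α)(∑_{i=1}^{[α]} λᵢ + (α - [α])λ_{[α]+1}) ≥ -θλ̄ holds, together with the cone conditions for all integer parameters 1 ≤ k ≤ [α], then λ₁ + ⋯ + λ_{[α]} ≥ -((α - [α])N + (N - [α])αθ)/(N - α) · λ̄. -/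
theorem stmt_2 (N : ℕ) (hN : 2 ≤ N) (α : ℝ) (hα1 : 1 ≤ α) (hαN : α < N)
    (lam : ℕ → ℝ) (lamBar θ : ℝ)
    (hmono : ∀ i j, 1 ≤ i → i ≤ j → j ≤ N → lam i ≤ lam j)
    (hsum : ∑ i ∈ Finset.Icc 1 N, lam i = N * lamBar)
    (hbar : 0 ≤ lamBar) (hθ : 0 ≤ θ)
    (hconeInt : ∀ k, 1 ≤ k → k ≤ ⌊α⌋₊ →
      ∑ i ∈ Finset.Icc 1 k, lam i ≥ -((k : ℝ) * θ * lamBar))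
    (hconeFrac : ∑ i ∈ Finset.Icc 1 ⌊α⌋₊, lam i + (α - ⌊α⌋₊) * lam (⌊α⌋₊ + 1)
      ≥ -(α * θ * lamBar)) :
    ∑ i ∈ Finset.Icc 1 ⌊α⌋₊, lam i ≥
      -(((α - ⌊α⌋₊) * N + ((N : ℝ) - ⌊α⌋₊) * α * θ) / ((N : ℝ) - α)) * lamBar := by
  set m := ⌊α⌋₊ with hm
  have hα0 : (0:ℝ) ≤ α := le_trans zero_le_one hα1
  have hm1 : 1 ≤ m := by
    rw [hm]; exact Nat.le_floor (by exact_mod_cast hα1)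
  have hmN : m < N := by
    rw [hm]; exact (Nat.floor_lt hα0).mpr hαN
  have hfl : (m : ℝ) ≤ α := Nat.floor_le hα0
  have hfl' : α < (m : ℝ) + 1 := Nat.lt_floor_add_one α
  -- split the sum
  have hsplit : (∑ i ∈ Finset.Icc 1 m, lam i) + (∑ i ∈ Finset.Ioc m N, lam i)
      = ∑ i ∈ Finset.Icc 1 N, lam i := by
    rw [show Finset.Icc 1 m = Finset.Ioc 0 m by rw [← Finset.Icc_add_one_left_eq_Ioc]; rfl,
        show Finset.Icc 1 N = Finset.Ioc 0 N by rw [← Finset.Icc_add_one_left_eq_Ioc]; rfl]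
    exact Finset.sum_Ioc_consecutive _ (Nat.zero_le m) hmN.le
  -- tail bound
  have htail : ((N : ℝ) - m) * lam (m + 1) ≤ ∑ i ∈ Finset.Ioc m N, lam i := by
    have hcard : (Finset.Ioc m N).card = N - m := Nat.card_Ioc m N
    have := Finset.card_nsmul_le_sum (Finset.Ioc m N) lam (lam (m + 1))
      (fun i hi => by
        rw [Finset.mem_Ioc] at hi
        exact hmono (m + 1) i (Nat.succ_le_succ (Nat.zero_le m)) hi.1 hi.2)
    rw [hcard, nsmul_eq_mul] at this
    have : ((N - m : ℕ) : ℝ) * lam (m + 1) ≤ ∑ i ∈ Finset.Ioc m N, lam i := this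
    rwa [Nat.cast_sub hmN.le] at this
  set S := ∑ i ∈ Finset.Icc 1 m, lam i with hS
  have hT : N * lamBar - S ≥ ((N : ℝ) - m) * lam (m + 1) := by
    rw [← hsum, ← hsplit]; linarith
  have hNα : (0:ℝ) < (N : ℝ) - α := by linarith
  have hf0 : (0:ℝ) ≤ α - m := by linarith
  have hNm : (0:ℝ) ≤ (N : ℝ) - m := by linarith
  have h1 : (α - m) * ((N : ℝ) * lamBar - S) ≥ (α - m) * (((N : ℝ) - m) * lam (m + 1)) :=
    mul_le_mul_of_nonneg_left hT hf0
  have h2 : ((N : ℝ) - m) * (S + (α - m) * lam (m + 1)) ≥ ((N : ℝ) - m) * (-(α * θ * lamBar)) :=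
    mul_le_mul_of_nonneg_left hconeFrac hNm
  rw [ge_iff_le, show -(((α - m) * N + ((N : ℝ) - m) * α * θ) / ((N : ℝ) - α)) * lamBar
      = (-(((α - m) * N + ((N : ℝ) - m) * α * θ) * lamBar)) / ((N : ℝ) - α) by ring,
    div_le_iff₀ hNα]
  nlinarith [h1, h2]
end

section
/- Let λ₁ ≤ λ₂ ≤ ⋯ ≤ λ_N be real numbers with ∑λᵢ = Nλ̄, λ̄ ≥ 0, θ ≥ 0, and let α ∈ [1, N) be a real number satisfying the cone condition ∑_{i=1}^{[α]} λᵢ + (α - [α])λ_{[α]+1} ≥ -αθλ̄, where the cone condition also holds with α replaced by each integer 1 ≤ k ≤ [α]. Then λ₁ ≥ -((α-1)N + α(N-1)θ)/(N-α) · λ̄. -/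
theorem stmt_3 (N : ℕ) (hN : 2 ≤ N) (α : ℝ) (hα1 : 1 ≤ α) (hαN : α < N)
    (lam : ℕ → ℝ) (lamBar θ : ℝ)
    (hmono : ∀ i j, 1 ≤ i → i ≤ j → j ≤ N → lam i ≤ lam j)
    (hsum : ∑ i ∈ Finset.Icc 1 N, lam i = N * lamBar)
    (hbar : 0 ≤ lamBar) (hθ : 0 ≤ θ)
    (hconeInt : ∀ k, 1 ≤ k → k ≤ ⌊α⌋₊ →
      ∑ i ∈ Finset.Icc 1 k, lam i ≥ -((k : ℝ) * θ * lamBar))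
    (hconeFrac : ∑ i ∈ Finset.Icc 1 ⌊α⌋₊, lam i + (α - ⌊α⌋₊) * lam (⌊α⌋₊ + 1)
      ≥ -(α * θ * lamBar)) :
    lam 1 ≥ -(((α - 1) * N + α * ((N : ℝ) - 1) * θ) / ((N : ℝ) - α)) * lamBar := by
  set m := ⌊α⌋₊ with hm
  have hα0 : (0:ℝ) ≤ α := by linarith
  have hmα : (m:ℝ) ≤ α := Nat.floor_le hα0
  have hm1 : 1 ≤ m := Nat.le_floor (by exact_mod_cast hα1)
  have hmN : m < N := by exact_mod_cast hmα.trans_lt hαN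
  have hIcc : ∀ k : ℕ, Finset.Icc 1 k = Finset.Ioc 0 k := fun k => Finset.Icc_add_one_left_eq_Ioc 0 k
  have hsplit : (∑ i ∈ Finset.Ioc 0 m, lam i) + ∑ i ∈ Finset.Ioc m N, lam i
      = ∑ i ∈ Finset.Ioc 0 N, lam i :=
    Finset.sum_Ioc_consecutive _ (Nat.zero_le m) hmN.le
  have hsplit1 : lam 1 + ∑ i ∈ Finset.Ioc 1 m, lam i = ∑ i ∈ Finset.Ioc 0 m, lam i := by
    have h := Finset.sum_Ioc_consecutive lam (Nat.zero_le 1) hm1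
    have h01 : Finset.Ioc 0 1 = {1} := rfl
    rw [h01, Finset.sum_singleton] at h
    exact h
  have hsumI : ∑ i ∈ Finset.Ioc 0 N, lam i = N * lamBar := by rw [← hIcc]; exact hsum
  have hS2 : ((N:ℝ) - m) * lam (m+1) ≤ ∑ i ∈ Finset.Ioc m N, lam i := by
    have h := Finset.card_nsmul_le_sum (Finset.Ioc m N) lam (lam (m+1))
      (fun i hi => by
        have hi' := Finset.mem_Ioc.mp hi
        exact hmono (m+1) i (by omega) (by omega) hi'.2)
    rw [Nat.card_Ioc, nsmul_eq_mul] at h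
    rwa [Nat.cast_sub hmN.le] at h
  have hS1b : ∑ i ∈ Finset.Ioc 1 m, lam i ≤ ((m:ℝ) - 1) * lam (m+1) := by
    have h := Finset.sum_le_card_nsmul (Finset.Ioc 1 m) lam (lam (m+1))
      (fun i hi => by
        have hi' := Finset.mem_Ioc.mp hi
        exact hmono i (m+1) (by omega) (by omega) (by omega))
    rw [Nat.card_Ioc, nsmul_eq_mul] at h
    rw [Nat.cast_sub hm1] at h
    push_cast at h
    exact h
  rw [hIcc] at hconeFrac
  have hNα : (0:ℝ) < (N:ℝ) - α := by linarith
  have hα1' : (0:ℝ) ≤ α - 1 := by linarith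
  -- key bound on lam (m+1)
  have hb : ((N:ℝ) - α) * lam (m+1) ≤ ((N:ℝ) + α * θ) * lamBar := by nlinarith
  have hL : lam 1 ≥ -(α * θ * lamBar) - (α - 1) * lam (m+1) := by nlinarith
  rw [ge_iff_le, ← neg_div, div_mul_eq_mul_div, div_le_iff₀ hNα]
  nlinarith [mul_le_mul_of_nonneg_left hb hα1', mul_le_mul_of_nonneg_right hL hNα.le]
end

section
/- Let N ≥ 2 be an integer and A ≥ 0 a real number. Define F(x) = ∑_{i=1}^N xᵢ³ - (3 - (N-2)/(N-1))(1+A)∑_{i=1}^N xᵢ² + (1+A)³N²/(N-1) on the set of x = (x₁,…,x_N) with xᵢ ≥ 0 for all i and ∑_{i=1}^N xᵢ = N(1+A). Then F(x) ≥ 0 for all such x. -/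
open Finset

set_option maxHeartbeats 1000000 in
lemma key_ineq (N : ℕ) (hN : 2 ≤ N) (s : ℝ) (hs : 0 ≤ s)
    (d : Fin N → ℝ) (hd : ∀ i, -s ≤ d i) (h0 : ∑ i, d i = 0) :
    0 ≤ ((N : ℝ) - 2) * s * ∑ i, (d i) ^ 2 + ((N : ℝ) - 1) * ∑ i, (d i) ^ 3 := by
  have hn2 : (2 : ℝ) ≤ (N : ℝ) := by exact_mod_cast hN
  set n : ℝ := (N : ℝ) with hn
  have hNe : (univ : Finset (Fin N)).Nonempty := by
    have : 0 < N := by omega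
    exact univ_nonempty_iff.mpr ⟨⟨0, this⟩⟩
  set m : ℝ := univ.sup' hNe (fun i => -d i) with hm
  have hmi : ∀ i, -d i ≤ m := fun i => le_sup' (fun j => -d j) (mem_univ i)
  have hms : m ≤ s := by
    obtain ⟨i0, -, hi0⟩ := exists_mem_eq_sup' hNe (fun i => -d i)
    rw [hm, hi0]; linarith [hd i0]
  set v := ∑ i, (d i) ^ 2 with hv
  set w := ∑ i, (d i) ^ 3 with hw
  have hv0 : 0 ≤ v := sum_nonneg fun i _ => sq_nonneg _
  have hwmv : 0 ≤ w + m * v := by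
    have h : ∀ i ∈ univ, (0:ℝ) ≤ (d i) ^ 2 * (d i + m) := fun i _ =>
      mul_nonneg (sq_nonneg _) (by linarith [hmi i])
    calc (0:ℝ) ≤ ∑ i, (d i) ^ 2 * (d i + m) := sum_nonneg h
      _ = w + m * v := by
          rw [hw, hv, mul_sum, ← sum_add_distrib]
          exact sum_congr rfl fun i _ => by ring
  by_cases hcase : (n - 1) * m ≤ (n - 2) * s
  · nlinarith [mul_nonneg (sub_nonneg.2 hcase) hv0]
  push_neg at hcase
  have hm0 : 0 < m := by nlinarith
  obtain ⟨i0, -, hi0⟩ := exists_mem_eq_sup' hNe (fun i => -d i)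
  have hmd : m = -d i0 := hm.trans hi0
  have hdi0 : d i0 = -m := by linarith
  set T : Finset (Fin N) := univ.filter (fun i => 0 < d i) with hT
  set Tc : Finset (Fin N) := univ.filter (fun i => ¬ 0 < d i) with hTc
  have hi0Tc : i0 ∈ Tc := by
    simp only [hTc, mem_filter, mem_univ, true_and]
    rw [hdi0]; linarith
  have hTcle : ∀ i ∈ Tc, d i ≤ 0 := by
    intro i hi; simp only [hTc, mem_filter] at hi; linarith [hi.2]
  set P := ∑ i ∈ T, d i with hP
  set vp := ∑ i ∈ T, (d i) ^ 2 with hvp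
  set vm := ∑ i ∈ Tc, (d i) ^ 2 with hvm
  set wp := ∑ i ∈ T, (d i) ^ 3 with hwp
  set wm := ∑ i ∈ Tc, (d i) ^ 3 with hwm
  have hvsplit : vp + vm = v := sum_filter_add_sum_filter_not _ _ _
  have hwsplit : wp + wm = w := sum_filter_add_sum_filter_not _ _ _
  have hQ : ∑ i ∈ Tc, (-(d i)) = P := by
    have h1 : P + ∑ i ∈ Tc, d i = ∑ i, d i := sum_filter_add_sum_filter_not _ _ _
    rw [h0] at h1
    rw [sum_neg_distrib]; linarith
  have hPm : m ≤ P := by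
    rw [← hQ]
    calc m = -d i0 := hmd
      _ ≤ ∑ i ∈ Tc, (-(d i)) :=
        single_le_sum (f := fun i => -d i) (fun i hi => by linarith [hTcle i hi]) hi0Tc
  have hP0 : 0 < P := lt_of_lt_of_le hm0 hPm
  have hvp0 : 0 ≤ vp := sum_nonneg fun i _ => sq_nonneg _
  have hvm0 : 0 ≤ vm := sum_nonneg fun i _ => sq_nonneg _
  have hwp0 : 0 ≤ wp := sum_nonneg fun i hi => by
    rw [hT, mem_filter] at hi
    exact le_of_lt (pow_pos hi.2 3)
  -- vm ≤ m * P
  have hvmP : vm ≤ m * P := by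
    rw [← hQ, mul_sum]
    refine sum_le_sum fun i hi => ?_
    have h1 := hTcle i hi
    have h2 := hmi i
    nlinarith
  -- wm + m * vm ≥ 0
  have hwmvm : 0 ≤ wm + m * vm := by
    have h : ∀ i ∈ Tc, (0:ℝ) ≤ (d i) ^ 2 * (d i + m) := fun i _ =>
      mul_nonneg (sq_nonneg _) (by linarith [hmi i])
    calc (0:ℝ) ≤ ∑ i ∈ Tc, (d i) ^ 2 * (d i + m) := sum_nonneg h
      _ = wm + m * vm := by
          rw [hwm, hvm, mul_sum, ← sum_add_distrib]
          exact sum_congr rfl fun i _ => by ring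
  -- Cauchy-Schwarz on T : vp^2 ≤ P * wp
  have hCS : vp ^ 2 ≤ P * wp := by
    have hnn : ∀ i ∈ T, 0 ≤ d i := by
      intro i hi; simp only [hT, mem_filter] at hi; linarith [hi.2]
    have := sum_mul_sq_le_sq_mul_sq T (fun i => Real.sqrt (d i))
      (fun i => d i * Real.sqrt (d i))
    have e1 : ∑ i ∈ T, Real.sqrt (d i) * (d i * Real.sqrt (d i)) = vp := by
      refine sum_congr rfl fun i hi => ?_
      have hsq := Real.sq_sqrt (hnn i hi)
      linear_combination (d i) * hsq
    have e2 : ∑ i ∈ T, (Real.sqrt (d i)) ^ 2 = P := by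
      refine sum_congr rfl fun i hi => Real.sq_sqrt (hnn i hi)
    have e3 : ∑ i ∈ T, (d i * Real.sqrt (d i)) ^ 2 = wp := by
      refine sum_congr rfl fun i hi => ?_
      have hsq := Real.sq_sqrt (hnn i hi)
      linear_combination (d i) ^ 2 * hsq
    rw [e1, e2, e3] at this
    exact this
  -- card bound : P^2 ≤ (n-1) * vp
  have hcard : P ^ 2 ≤ (n - 1) * vp := by
    have h1 : P ^ 2 ≤ (T.card : ℝ) * vp := by
      exact_mod_cast sq_sum_le_card_mul_sum_sq (s := T) (f := d)
    have h2 : (T.card : ℝ) ≤ n - 1 := by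
      have hi0T : i0 ∉ T := by
        simp only [hT, mem_filter, mem_univ, true_and]
        rw [hdi0]; push_neg; linarith
      have : T ⊆ univ.erase i0 := fun i hi =>
        mem_erase.2 ⟨fun he => hi0T (he ▸ hi), mem_univ i⟩
      have hc := card_le_card this
      rw [card_erase_of_mem (mem_univ i0), card_univ, Fintype.card_fin] at hc
      have : (T.card : ℝ) ≤ ((N - 1 : ℕ) : ℝ) := by exact_mod_cast hc
      rw [Nat.cast_sub (by omega)] at this
      simpa [hn] using this
    nlinarith
  -- now combine
  set c := (n - 1) * m - (n - 2) * s with hc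
  have hc0 : 0 < c := by rw [hc]; linarith
  have key1 : -(c * (m * P)) ≤ (n - 2) * s * vm + (n - 1) * wm := by
    have a : 0 ≤ c * (m * P - vm) := mul_nonneg hc0.le (by linarith)
    have b : 0 ≤ (n - 1) * (wm + m * vm) :=
      mul_nonneg (by linarith) hwmvm
    rw [hc] at a ⊢
    linarith [a, b]
  have q3 : (n - 1) * (c * m) ≤ (n - 2) * s * P + P ^ 2 := by
    rw [hc]
    have h1 : 0 ≤ ((n - 2) * s) * (P - m) :=
      mul_nonneg (mul_nonneg (by linarith) hs) (by linarith)
    have h2 : 0 ≤ (P - m) * (P + m) :=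
      mul_nonneg (by linarith) (by linarith)
    have h3 : 0 ≤ (n * (n - 2) * m) * (s - m) :=
      mul_nonneg (mul_nonneg (mul_nonneg (by linarith) (by linarith)) hm0.le) (by linarith)
    linarith [h1, h2, h3]
  -- P^3 ≤ (n-1)^2 * wp
  have r2 : P ^ 4 ≤ (n - 1) ^ 2 * (P * wp) := by
    nlinarith [hcard, hCS, sq_nonneg vp, mul_nonneg hvp0 hP0.le]
  have r3 : P ^ 3 ≤ (n - 1) ^ 2 * wp := by
    have := (mul_le_mul_iff_left₀ hP0).mp (by nlinarith [r2] : P ^ 3 * P ≤ ((n - 1) ^ 2 * wp) * P)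
    exact this
  have r4 : (n - 2) * s * P ^ 2 ≤ (n - 1) * ((n - 2) * s * vp) := by
    nlinarith [mul_nonneg (mul_nonneg (by linarith : (0:ℝ) ≤ n - 2) hs) (sub_nonneg.2 hcard)]
  have q3P : (n - 1) * (c * m) * P ≤ ((n - 2) * s * P + P ^ 2) * P :=
    mul_le_mul_of_nonneg_right q3 hP0.le
  have key2 : c * (m * P) ≤ (n - 2) * s * vp + (n - 1) * wp := by
    have big : (n - 1) * (c * (m * P)) ≤ (n - 1) * ((n - 2) * s * vp + (n - 1) * wp) := by
      nlinarith [r3, r4, q3P]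
    have hn1 : (0:ℝ) < n - 1 := by linarith
    exact le_of_mul_le_mul_left (by linarith [big]) hn1
  have : 0 ≤ (n - 2) * s * (vp + vm) + (n - 1) * (wp + wm) := by nlinarith [key1, key2]
  rw [hvsplit, hwsplit] at this
  exact this

theorem stmt_4 (N : ℕ) (hN : 2 ≤ N) (A : ℝ) (hA : 0 ≤ A)
    (x : Fin N → ℝ) (hx : ∀ i, 0 ≤ x i)
    (hsum : ∑ i, x i = N * (1 + A)) :
    0 ≤ ∑ i, (x i) ^ 3
        - (3 - ((N : ℝ) - 2) / ((N : ℝ) - 1)) * (1 + A) * ∑ i, (x i) ^ 2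
        + (1 + A) ^ 3 * (N : ℝ) ^ 2 / ((N : ℝ) - 1) := by
  have hn2 : (2 : ℝ) ≤ (N : ℝ) := by exact_mod_cast hN
  set s : ℝ := 1 + A with hs
  have hs0 : (0:ℝ) ≤ s := by linarith
  have h0 : ∑ i, (x i - s) = 0 := by
    rw [Finset.sum_sub_distrib, hsum]
    simp [card_univ]
  have hk := key_ineq N hN s hs0 (fun i => x i - s)
    (fun i => by linarith [hx i]) h0
  set v := ∑ i, (x i - s) ^ 2 with hv
  set w := ∑ i, (x i - s) ^ 3 with hw
  have e2 : ∑ i, (x i) ^ 2 = v + N * s ^ 2 := by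
    have : ∀ i ∈ univ, (x i) ^ 2 = (x i - s) ^ 2 + 2 * s * (x i - s) + s ^ 2 :=
      fun i _ => by ring
    rw [sum_congr rfl this, sum_add_distrib, sum_add_distrib, ← mul_sum, h0]
    simp [card_univ, mul_comm]
    rfl
  have e3 : ∑ i, (x i) ^ 3 = w + 3 * s * v + N * s ^ 3 := by
    have : ∀ i ∈ univ, (x i) ^ 3
        = (x i - s) ^ 3 + 3 * s * (x i - s) ^ 2 + 3 * s ^ 2 * (x i - s) + s ^ 3 :=
      fun i _ => by ring
    rw [sum_congr rfl this, sum_add_distrib, sum_add_distrib, sum_add_distrib,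
      ← mul_sum, ← mul_sum, h0]
    simp [card_univ, mul_comm]
    rfl
  rw [e2, e3]
  have hne : ((N : ℝ) - 1) ≠ 0 := by linarith
  have heq : w + 3 * s * v + ↑N * s ^ 3 - (3 - (↑N - 2) / (↑N - 1)) * (1 + A) * (v + ↑N * s ^ 2)
      + (1 + A) ^ 3 * (↑N : ℝ) ^ 2 / (↑N - 1)
      = (((N:ℝ) - 2) * s * v + ((N:ℝ) - 1) * w) / ((N:ℝ) - 1) := by
    rw [← hs]
    field_simp
    ring
  rw [heq]
  exact div_nonneg hk (by linarith)
end

section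
/- Let w₁, …, w_N ≥ 0 be real numbers, and let λ₁ ≤ λ₂ ≤ ⋯ ≤ λ_N be real numbers. Let m be an integer with 1 ≤ m < N, t ∈ [0,1), and set α = m + t. Let W* = max₁≤j≤N wⱼ. Then ∑_{j=1}^N λⱼwⱼ ≥ W*·(∑_{j=1}^m λⱼ + tλ_{m+1}) + λ_{m+1}·(∑_{j=1}^N wⱼ - αW*), provided ∑_{j=1}^N wⱼ ≥ αW*. -/
theorem stmt_9 (N m : ℕ) (hm1 : 1 ≤ m) (hmN : m < N)
    (t : ℝ) (ht0 : 0 ≤ t) (ht1 : t < 1)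
    (w lam : ℕ → ℝ) (Wstar : ℝ)
    (hw : ∀ j, 1 ≤ j → j ≤ N → 0 ≤ w j)
    (hmono : ∀ i j, 1 ≤ i → i ≤ j → j ≤ N → lam i ≤ lam j)
    (hWub : ∀ j, 1 ≤ j → j ≤ N → w j ≤ Wstar)
    (hWmem : ∃ j, 1 ≤ j ∧ j ≤ N ∧ w j = Wstar)
    (hwsum : ∑ j ∈ Finset.Icc 1 N, w j ≥ ((m : ℝ) + t) * Wstar) :
    ∑ j ∈ Finset.Icc 1 N, lam j * w j ≥
      Wstar * (∑ j ∈ Finset.Icc 1 m, lam j + t * lam (m + 1))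
      + lam (m + 1) * (∑ j ∈ Finset.Icc 1 N, w j - ((m : ℝ) + t) * Wstar) := by
  have hsplit : ∀ f : ℕ → ℝ, ∑ j ∈ Finset.Icc 1 N, f j =
      ∑ j ∈ Finset.Icc 1 m, f j + ∑ j ∈ Finset.Icc (m+1) N, f j := by
    intro f
    have e : ∀ k, Finset.Icc 1 k = Finset.Ioc 0 k := fun k => by ext x; simp; omega
    rw [e N, e m, Finset.Icc_add_one_left_eq_Ioc]
    exact (Finset.sum_Ioc_consecutive f (Nat.zero_le m) hmN.le).symm
  have A : ∑ j ∈ Finset.Icc 1 m, (lam j * Wstar + lam (m+1) * (w j - Wstar))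
      ≤ ∑ j ∈ Finset.Icc 1 m, lam j * w j := by
    apply Finset.sum_le_sum
    intro j hj
    simp only [Finset.mem_Icc] at hj
    have h1 := hWub j hj.1 (le_trans hj.2 hmN.le)
    have h2 := hmono j (m+1) hj.1 (by omega) (by omega)
    nlinarith
  have B : ∑ j ∈ Finset.Icc (m+1) N, lam (m+1) * w j
      ≤ ∑ j ∈ Finset.Icc (m+1) N, lam j * w j := by
    apply Finset.sum_le_sum
    intro j hj
    simp only [Finset.mem_Icc] at hj
    have h1 := hw j (by omega) hj.2
    have h2 := hmono (m+1) j (by omega) hj.1 hj.2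
    nlinarith
  have hA' : ∑ j ∈ Finset.Icc 1 m, (lam j * Wstar + lam (m+1) * (w j - Wstar))
      = Wstar * ∑ j ∈ Finset.Icc 1 m, lam j
        + lam (m+1) * (∑ j ∈ Finset.Icc 1 m, w j - m * Wstar) := by
    rw [Finset.sum_add_distrib, ← Finset.sum_mul]
    simp only [mul_sub]
    rw [Finset.sum_sub_distrib, ← Finset.mul_sum, Finset.sum_const, Nat.card_Icc]
    simp
    ring
  have hB' : ∑ j ∈ Finset.Icc (m+1) N, lam (m+1) * w j
      = lam (m+1) * ∑ j ∈ Finset.Icc (m+1) N, w j := by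
    rw [Finset.mul_sum]
  rw [hsplit (fun j => lam j * w j)]
  rw [hsplit w]
  rw [hA'] at A
  rw [hB'] at B
  nlinarith [A, B]
end

section
/- Let n = 4 or n = 5, N = (n+2)(n-1)/2, and let λ₁ ≤ ⋯ ≤ λ_N be real numbers with average λ̄ ≥ 0 satisfying λⱼ ≥ -Aλ̄ for all j, where A = ((α-1)N + α(N-1)θ)/(N-α), θ = (n-1)((n+2)(n+5) - (3n+8)α)/(3α(n+3)(n-2)), and 1 ≤ α ≤ (n+2)(n+5)/(3n+8). Then 8∑λⱼ³ + (8(n-4)/3)λ̄∑λⱼ² - (4(n+2)(n-1)²/3)λ̄³ ≥ 0. -/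
set_option maxHeartbeats 1600000

theorem case4 (N : ℕ) (hN : 2 * N = (4 + 2) * (4 - 1))
    (α θ A : ℝ) (hα1 : 1 ≤ α)
    (hα2 : α ≤ ((4 : ℝ) + 2) * ((4 : ℝ) + 5) / (3 * (4 : ℝ) + 8))
    (hθ : θ = ((4 : ℝ) - 1) * (((4 : ℝ) + 2) * ((4 : ℝ) + 5) - (3 * (4 : ℝ) + 8) * α)
            / (3 * α * ((4 : ℝ) + 3) * ((4 : ℝ) - 2)))
    (hA : A = ((α - 1) * (N : ℝ) + α * ((N : ℝ) - 1) * θ) / ((N : ℝ) - α))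
    (lam : ℕ → ℝ) (lamBar : ℝ)
    (hmono : ∀ i j, 1 ≤ i → i ≤ j → j ≤ N → lam i ≤ lam j)
    (hsum : ∑ i ∈ Finset.Icc 1 N, lam i = N * lamBar)
    (hbar : 0 ≤ lamBar)
    (hlow : ∀ j, 1 ≤ j → j ≤ N → lam j ≥ -(A * lamBar)) :
    0 ≤ 8 * ∑ j ∈ Finset.Icc 1 N, (lam j) ^ 3
        + (8 * ((4 : ℝ) - 4) / 3) * lamBar * ∑ j ∈ Finset.Icc 1 N, (lam j) ^ 2
        - (4 * ((4 : ℝ) + 2) * ((4 : ℝ) - 1) ^ 2 / 3) * lamBar ^ 3 := by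
  have hN9 : N = 9 := by omega
  subst hN9
  have hαpos : (0:ℝ) < α := by linarith
  have hα0 : α ≠ 0 := ne_of_gt hαpos
  have hα27 : α ≤ 27/10 := by norm_num at hα2; linarith
  have h9 : (9:ℝ) - α ≠ 0 := ne_of_gt (by linarith)
  have hA17 : A = 17/7 := by
    rw [hθ] at hA
    rw [hA]
    push_cast
    field_simp
    ring
  have low : ∀ j, 1 ≤ j → j ≤ 9 → -(17/7*lamBar) ≤ lam j := by
    intro j h1 h2
    have := hlow j h1 h2
    rw [hA17] at this
    linarith
  have ex : ∀ f : ℕ → ℝ, ∑ i ∈ Finset.Icc 1 9, f i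
      = f 1 + f 2 + f 3 + f 4 + f 5 + f 6 + f 7 + f 8 + f 9 := by
    intro f
    rw [show Finset.Icc 1 9 = ({1,2,3,4,5,6,7,8,9} : Finset ℕ) from by decide]
    norm_num [Finset.sum_insert, Finset.mem_insert]
    ring
  simp only [ex] at hsum ⊢
  push_cast at hsum
  have hz : lamBar^2 * ((lam 1 + lam 2 + lam 3 + lam 4 + lam 5 + lam 6 + lam 7 + lam 8 + lam 9)
      - 9*lamBar) = 0 := by linear_combination lamBar^2 * hsum
  by_cases hc : -2*lamBar ≤ lam 1
  · have m : ∀ j, 1 ≤ j → j ≤ 9 → 0 ≤ 8*(lam j - lamBar)^2*(lam j + 2*lamBar) := by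
      intro j h1 h2
      have := hmono 1 j le_rfl h1 h2
      have : -2*lamBar ≤ lam j := by linarith
      have h8 : (0:ℝ) ≤ 8 := by norm_num
      exact mul_nonneg (mul_nonneg h8 (sq_nonneg _)) (by linarith)
    have t1 := m 1 (by norm_num) (by norm_num)
    have t2 := m 2 (by norm_num) (by norm_num)
    have t3 := m 3 (by norm_num) (by norm_num)
    have t4 := m 4 (by norm_num) (by norm_num)
    have t5 := m 5 (by norm_num) (by norm_num)
    have t6 := m 6 (by norm_num) (by norm_num)
    have t7 := m 7 (by norm_num) (by norm_num)
    have t8 := m 8 (by norm_num) (by norm_num)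
    have t9 := m 9 (by norm_num) (by norm_num)
    linarith [t1, t2, t3, t4, t5, t6, t7, t8, t9, hz]
  · push_neg at hc
    have u : ∀ j, 1 ≤ j → j ≤ 9 →
        0 ≤ 8*(lam j - 10*lamBar/7)^2*(lam j + 20*lamBar/7) := by
      intro j h1 h2
      have := low j h1 h2
      have h8 : (0:ℝ) ≤ 8 := by norm_num
      exact mul_nonneg (mul_nonneg h8 (sq_nonneg _)) (by linarith)
    have u2 := u 2 (by norm_num) (by norm_num)
    have u3 := u 3 (by norm_num) (by norm_num)
    have u4 := u 4 (by norm_num) (by norm_num)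
    have u5 := u 5 (by norm_num) (by norm_num)
    have u6 := u 6 (by norm_num) (by norm_num)
    have u7 := u 7 (by norm_num) (by norm_num)
    have u8 := u 8 (by norm_num) (by norm_num)
    have u9 := u 9 (by norm_num) (by norm_num)
    have hw : 0 ≤ (lam 1 + 17*lamBar/7) *
        (8*(lam 1 - lamBar)*(lam 1 - 10*lamBar/7) - 648/49*lamBar^2) := by
      have h1 := low 1 (by norm_num) (by norm_num)
      refine mul_nonneg (by linarith) ?_
      nlinarith [sq_nonneg (lam 1 + 2*lamBar),
        mul_nonneg hbar (show (0:ℝ) ≤ -2*lamBar - lam 1 by linarith), sq_nonneg lamBar]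
    linarith [u2, u3, u4, u5, u6, u7, u8, u9, hw, hz]

theorem case5 (N : ℕ) (hN : 2 * N = (5 + 2) * (5 - 1))
    (α θ A : ℝ) (hα1 : 1 ≤ α)
    (hα2 : α ≤ ((5 : ℝ) + 2) * ((5 : ℝ) + 5) / (3 * (5 : ℝ) + 8))
    (hθ : θ = ((5 : ℝ) - 1) * (((5 : ℝ) + 2) * ((5 : ℝ) + 5) - (3 * (5 : ℝ) + 8) * α)
            / (3 * α * ((5 : ℝ) + 3) * ((5 : ℝ) - 2)))
    (hA : A = ((α - 1) * (N : ℝ) + α * ((N : ℝ) - 1) * θ) / ((N : ℝ) - α))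
    (lam : ℕ → ℝ) (lamBar : ℝ)
    (hmono : ∀ i j, 1 ≤ i → i ≤ j → j ≤ N → lam i ≤ lam j)
    (hsum : ∑ i ∈ Finset.Icc 1 N, lam i = N * lamBar)
    (hbar : 0 ≤ lamBar)
    (hlow : ∀ j, 1 ≤ j → j ≤ N → lam j ≥ -(A * lamBar)) :
    0 ≤ 8 * ∑ j ∈ Finset.Icc 1 N, (lam j) ^ 3
        + (8 * ((5 : ℝ) - 4) / 3) * lamBar * ∑ j ∈ Finset.Icc 1 N, (lam j) ^ 2
        - (4 * ((5 : ℝ) + 2) * ((5 : ℝ) - 1) ^ 2 / 3) * lamBar ^ 3 := by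
  have hN14 : N = 14 := by omega
  subst hN14
  have hαpos : (0:ℝ) < α := by linarith
  have hα0 : α ≠ 0 := ne_of_gt hαpos
  have hα70 : α ≤ 70/23 := by norm_num at hα2; linarith
  have h14 : (14:ℝ) - α ≠ 0 := ne_of_gt (by linarith)
  have hA47 : A = 47/18 := by
    rw [hθ] at hA
    rw [hA]
    push_cast
    field_simp
    ring
  have low : ∀ j, 1 ≤ j → j ≤ 14 → -(47/18*lamBar) ≤ lam j := by
    intro j h1 h2
    have := hlow j h1 h2
    rw [hA47] at this
    linarith
  have ex : ∀ f : ℕ → ℝ, ∑ i ∈ Finset.Icc 1 14, f i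
      = f 1 + f 2 + f 3 + f 4 + f 5 + f 6 + f 7 + f 8 + f 9 + f 10 + f 11 + f 12 + f 13 + f 14 := by
    intro f
    rw [show Finset.Icc 1 14 = ({1,2,3,4,5,6,7,8,9,10,11,12,13,14} : Finset ℕ) from by decide]
    norm_num [Finset.sum_insert, Finset.mem_insert]
    ring
  simp only [ex] at hsum ⊢
  push_cast at hsum
  have hz : lamBar^2 * ((lam 1 + lam 2 + lam 3 + lam 4 + lam 5 + lam 6 + lam 7 + lam 8 + lam 9
      + lam 10 + lam 11 + lam 12 + lam 13 + lam 14) - 14*lamBar) = 0 := by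
    linear_combination lamBar^2 * hsum
  by_cases hc : -7/3*lamBar ≤ lam 1
  · have m : ∀ j, 1 ≤ j → j ≤ 14 → 0 ≤ 8*(lam j - lamBar)^2*(lam j + 7*lamBar/3) := by
      intro j h1 h2
      have := hmono 1 j le_rfl h1 h2
      have h8 : (0:ℝ) ≤ 8 := by norm_num
      exact mul_nonneg (mul_nonneg h8 (sq_nonneg _)) (by linarith)
    have t1 := m 1 (by norm_num) (by norm_num)
    have t2 := m 2 (by norm_num) (by norm_num)
    have t3 := m 3 (by norm_num) (by norm_num)
    have t4 := m 4 (by norm_num) (by norm_num)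
    have t5 := m 5 (by norm_num) (by norm_num)
    have t6 := m 6 (by norm_num) (by norm_num)
    have t7 := m 7 (by norm_num) (by norm_num)
    have t8 := m 8 (by norm_num) (by norm_num)
    have t9 := m 9 (by norm_num) (by norm_num)
    have t10 := m 10 (by norm_num) (by norm_num)
    have t11 := m 11 (by norm_num) (by norm_num)
    have t12 := m 12 (by norm_num) (by norm_num)
    have t13 := m 13 (by norm_num) (by norm_num)
    have t14 := m 14 (by norm_num) (by norm_num)
    linarith [t1, t2, t3, t4, t5, t6, t7, t8, t9, t10, t11, t12, t13, t14, hz]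
  · push_neg at hc
    have u : ∀ j, 1 ≤ j → j ≤ 14 →
        0 ≤ 8*(lam j - 23*lamBar/18)^2*(lam j + 26*lamBar/9) := by
      intro j h1 h2
      have := low j h1 h2
      have h8 : (0:ℝ) ≤ 8 := by norm_num
      exact mul_nonneg (mul_nonneg h8 (sq_nonneg _)) (by linarith)
    have u2 := u 2 (by norm_num) (by norm_num)
    have u3 := u 3 (by norm_num) (by norm_num)
    have u4 := u 4 (by norm_num) (by norm_num)
    have u5 := u 5 (by norm_num) (by norm_num)
    have u6 := u 6 (by norm_num) (by norm_num)
    have u7 := u 7 (by norm_num) (by norm_num)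
    have u8 := u 8 (by norm_num) (by norm_num)
    have u9 := u 9 (by norm_num) (by norm_num)
    have u10 := u 10 (by norm_num) (by norm_num)
    have u11 := u 11 (by norm_num) (by norm_num)
    have u12 := u 12 (by norm_num) (by norm_num)
    have u13 := u 13 (by norm_num) (by norm_num)
    have u14 := u 14 (by norm_num) (by norm_num)
    have hw : 0 ≤ (lam 1 + 47*lamBar/18) *
        (8*(lam 1 - lamBar)*(lam 1 - 23*lamBar/18) - 700/81*lamBar^2) := by
      have h1 := low 1 (by norm_num) (by norm_num)
      refine mul_nonneg (by linarith) ?_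
      nlinarith [sq_nonneg (lam 1 + 7*lamBar/3),
        mul_nonneg hbar (show (0:ℝ) ≤ -7/3*lamBar - lam 1 by linarith), sq_nonneg lamBar]
    linarith [u2, u3, u4, u5, u6, u7, u8, u9, u10, u11, u12, u13, u14, hw, hz]

theorem stmt_14 (n : ℕ) (hn : n = 4 ∨ n = 5) (N : ℕ)
    (hN : 2 * N = (n + 2) * (n - 1))
    (α θ A : ℝ) (hα1 : 1 ≤ α)
    (hα2 : α ≤ ((n : ℝ) + 2) * ((n : ℝ) + 5) / (3 * (n : ℝ) + 8))
    (hθ : θ = ((n : ℝ) - 1) * (((n : ℝ) + 2) * ((n : ℝ) + 5) - (3 * (n : ℝ) + 8) * α)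
            / (3 * α * ((n : ℝ) + 3) * ((n : ℝ) - 2)))
    (hA : A = ((α - 1) * (N : ℝ) + α * ((N : ℝ) - 1) * θ) / ((N : ℝ) - α))
    (lam : ℕ → ℝ) (lamBar : ℝ)
    (hmono : ∀ i j, 1 ≤ i → i ≤ j → j ≤ N → lam i ≤ lam j)
    (hsum : ∑ i ∈ Finset.Icc 1 N, lam i = N * lamBar)
    (hbar : 0 ≤ lamBar)
    (hlow : ∀ j, 1 ≤ j → j ≤ N → lam j ≥ -(A * lamBar)) :
    0 ≤ 8 * ∑ j ∈ Finset.Icc 1 N, (lam j) ^ 3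
        + (8 * ((n : ℝ) - 4) / 3) * lamBar * ∑ j ∈ Finset.Icc 1 N, (lam j) ^ 2
        - (4 * ((n : ℝ) + 2) * ((n : ℝ) - 1) ^ 2 / 3) * lamBar ^ 3 := by
  obtain rfl | rfl := hn
  · push_cast at hα2 hθ ⊢
    exact case4 N hN α θ A hα1 hα2 hθ hA lam lamBar hmono hsum hbar hlow
  · push_cast at hα2 hθ ⊢
    exact case5 N hN α θ A hα1 hα2 hθ hA lam lamBar hmono hsum hbar hlow
end
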